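/- Let X be a symmetric positive semidefinite n × n real matrix and Y an m × n real matrix satisfying: (i) there is a > 0 with ⟨x, Xx⟩ ≥ a‖x‖² for all x ∈ ℝⁿ with Yx = 0; (ii) ‖X‖ ≤ b in the spectral norm; (iii) there is c > 0 with ‖Yᵀη‖ ≥ c‖η‖ for all η ∈ ℝᵐ. Let E := [[X, Yᵀ],[Y, 0]]. Then for every z ∈ ℝⁿ⁺ᵐ one has (1/σ_max(Ψ))·‖z‖ ≤ ‖Ez‖, where Ψ is the 2 × 2 matrix [[1/a, (1 + b/a)/c],[(1 + b/a)/c, (b/c²)(1 + b/a)]] and its largest singular value is σ_max(Ψ) = (ba + b² + c² + √(b⁴ + 2b³a + b²a² + 2b²c² + 6bac² + 4a²c² + c⁴))/(2ac²). -/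

import Mathlib

open Matrix

/-- The vector in Euclidean space obtained by applying the matrix `M` to `x`
(matrix-vector multiplication, viewed as a map between Euclidean spaces). -/
noncomputable def mulVecE {ι κ : Type} [Fintype ι] [Fintype κ] [DecidableEq κ]
    (M : Matrix ι κ ℝ) (x : EuclideanSpace ℝ κ) : EuclideanSpace ℝ ι :=
  Matrix.toEuclideanLin M x

/-- The spectral norm (Euclidean operator norm) of a matrix. -/
noncomputable def specNorm {ι κ : Type} [Fintype ι] [Fintype κ] [DecidableEq κ]
    (M : Matrix ι κ ℝ) : ℝ :=
  ‖LinearMap.toContinuousLinearMap (Matrix.toEuclideanLin M)‖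

lemma core (p q r s t : ℝ) (hp : 0 < p) (hq : 0 < q) (hr : 0 ≤ r) (ht : 0 ≤ t)
    (ht2 : t^2 = (p-r)^2 + 4*q^2) (hst : 2*s = p + r + t) :
    p < s ∧
    (∀ u w : ℝ, (p*u + q*w)^2 + (q*u + r*w)^2 ≤ s^2*(u^2+w^2)) ∧
    q^2 + r*(s-p) = s*(s-p) := by
  have htt : t = 2*s - (p+r) := by linarith
  have ht2' : (2*s-(p+r))^2 = (p-r)^2 + 4*q^2 := by rw [← htt]; exact ht2
  have hroot : s^2 - (p+r)*s + p*r - q^2 = 0 := by linear_combination (1/4 : ℝ) * ht2'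
  have htpr : p - r < t := by nlinarith [sq_nonneg (t - (p-r))]
  have hsp : p < s := by linarith
  refine ⟨hsp, ?_, by linear_combination -hroot⟩
  intro u w
  set α := s^2 - p^2 - q^2 with hαdef
  set β := q*(p+r) with hβdef
  have hα : α = (p+r)*(s-p) := by rw [hαdef]; linear_combination hroot
  have hαpos : 0 < α := by rw [hα]; nlinarith
  have hαγ : α * (s^2 - q^2 - r^2) = β^2 := by
    rw [hαdef, hβdef]
    linear_combination ((s^2-(p+r)*s+p*r-q^2) + (p+r)*(2*s-p-r) + (p+r)^2) * hroot
  have key : α * (s^2*(u^2+w^2) - ((p*u+q*w)^2 + (q*u+r*w)^2)) = (α*u - β*w)^2 := by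
    linear_combination (w^2) * hαγ
  nlinarith [key, hαpos, sq_nonneg (α*u - β*w)]

lemma specAux (a b c s : ℝ) (ha : 0 < a) (hb0 : 0 ≤ b) (hc : 0 < c)
    (hs : s = (b * a + b ^ 2 + c ^ 2 +
        Real.sqrt (b ^ 4 + 2 * b ^ 3 * a + b ^ 2 * a ^ 2 + 2 * b ^ 2 * c ^ 2 +
          6 * b * a * c ^ 2 + 4 * a ^ 2 * c ^ 2 + c ^ 4)) / (2 * a * c ^ 2)) :
    1/a < s ∧
    (∀ u w : ℝ, ((1/a)*u + ((1+b/a)*(1/c))*w)^2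
        + (((1+b/a)*(1/c))*u + ((b/c^2)*(1+b/a))*w)^2 ≤ s^2*(u^2+w^2)) ∧
    ((1+b/a)*(1/c))^2 + ((b/c^2)*(1+b/a))*(s-1/a) = s*(s-1/a) := by
  have hDnn : (0:ℝ) ≤ b ^ 4 + 2 * b ^ 3 * a + b ^ 2 * a ^ 2 + 2 * b ^ 2 * c ^ 2 +
      6 * b * a * c ^ 2 + 4 * a ^ 2 * c ^ 2 + c ^ 4 := by nlinarith [sq_nonneg (c^2 - a*b - b^2), sq_nonneg (2*c*(a+b))]
  have hsq : Real.sqrt (b ^ 4 + 2 * b ^ 3 * a + b ^ 2 * a ^ 2 + 2 * b ^ 2 * c ^ 2 +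
      6 * b * a * c ^ 2 + 4 * a ^ 2 * c ^ 2 + c ^ 4) ^ 2 = b ^ 4 + 2 * b ^ 3 * a + b ^ 2 * a ^ 2 + 2 * b ^ 2 * c ^ 2 +
      6 * b * a * c ^ 2 + 4 * a ^ 2 * c ^ 2 + c ^ 4 := Real.sq_sqrt hDnn
  have hsqnn : 0 ≤ Real.sqrt (b ^ 4 + 2 * b ^ 3 * a + b ^ 2 * a ^ 2 + 2 * b ^ 2 * c ^ 2 +
      6 * b * a * c ^ 2 + 4 * a ^ 2 * c ^ 2 + c ^ 4) := Real.sqrt_nonneg _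
  have ht2 : (Real.sqrt (b ^ 4 + 2 * b ^ 3 * a + b ^ 2 * a ^ 2 + 2 * b ^ 2 * c ^ 2 +
      6 * b * a * c ^ 2 + 4 * a ^ 2 * c ^ 2 + c ^ 4) / (a*c^2))^2 = ((1/a)-((b/c^2)*(1+b/a)))^2 + 4*((1+b/a)*(1/c))^2 := by
    rw [div_pow, hsq]
    field_simp
    ring
  have hst : 2*s = (1/a) + ((b/c^2)*(1+b/a)) + Real.sqrt (b ^ 4 + 2 * b ^ 3 * a + b ^ 2 * a ^ 2 + 2 * b ^ 2 * c ^ 2 +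
      6 * b * a * c ^ 2 + 4 * a ^ 2 * c ^ 2 + c ^ 4) / (a*c^2) := by
    rw [hs]; field_simp; ring
  exact core (1/a) ((1+b/a)*(1/c)) ((b/c^2)*(1+b/a)) s (Real.sqrt (b ^ 4 + 2 * b ^ 3 * a + b ^ 2 * a ^ 2 + 2 * b ^ 2 * c ^ 2 +
      6 * b * a * c ^ 2 + 4 * a ^ 2 * c ^ 2 + c ^ 4) / (a*c^2))
    (by positivity) (by positivity) (by positivity) (by positivity) ht2 hst

lemma mulVecE_apply {ι κ : Type} [Fintype ι] [Fintype κ] [DecidableEq κ]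
    (M : Matrix ι κ ℝ) (x : EuclideanSpace ℝ κ) (i : ι) :
    mulVecE M x i = ∑ j, M i j * x j := rfl

lemma normsq_eq {ι : Type} [Fintype ι] (x : EuclideanSpace ℝ ι) :
    ‖x‖^2 = ∑ i, (x i)^2 := by
  rw [EuclideanSpace.norm_eq, Real.sq_sqrt (by positivity)]
  simp [sq_abs]

lemma mulVecE_le {ι κ : Type} [Fintype ι] [Fintype κ] [DecidableEq κ]
    (M : Matrix ι κ ℝ) (x : EuclideanSpace ℝ κ) :
    ‖mulVecE M x‖ ≤ specNorm M * ‖x‖ := by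
  simpa [mulVecE, specNorm] using
    (LinearMap.toContinuousLinearMap (Matrix.toEuclideanLin M)).le_opNorm x

lemma specNorm_nonneg {ι κ : Type} [Fintype ι] [Fintype κ] [DecidableEq κ]
    (M : Matrix ι κ ℝ) : 0 ≤ specNorm M := norm_nonneg _

lemma inner_mulVecE {ι : Type} [Fintype ι] [DecidableEq ι] (x y : EuclideanSpace ℝ ι) :
    (inner ℝ x y : ℝ) = ∑ i, x i * y i := by
  simp [PiLp.inner_apply, RCLike.inner_apply, mul_comm]

-- transpose = adjoint over ℝ
lemma transpose_eq_adjoint {n m : ℕ} (Y : Matrix (Fin m) (Fin n) ℝ) :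
    Matrix.toEuclideanLin Yᵀ = LinearMap.adjoint (Matrix.toEuclideanLin Y) := by
  rw [← Matrix.toEuclideanLin_conjTranspose_eq_adjoint]
  congr 1

-- coercivity on orthogonal complement of kernel
lemma orth_bound {n m : ℕ} (Y : Matrix (Fin m) (Fin n) ℝ) (c : ℝ)
    (hYt : ∀ η : EuclideanSpace ℝ (Fin m), c * ‖η‖ ≤ ‖mulVecE Yᵀ η‖)
    (hc : 0 < c) (v : EuclideanSpace ℝ (Fin n))
    (hv : v ∈ (LinearMap.ker (Matrix.toEuclideanLin Y))ᗮ) :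
    c * ‖v‖ ≤ ‖mulVecE Y v‖ := by
  set YL := Matrix.toEuclideanLin Y with hYL
  set YtL := Matrix.toEuclideanLin Yᵀ with hYtL
  have hadj : YtL = LinearMap.adjoint YL := transpose_eq_adjoint Y
  have hker : LinearMap.ker YL = (LinearMap.range YtL)ᗮ := by
    ext u
    simp only [LinearMap.mem_ker, Submodule.mem_orthogonal]
    constructor
    · rintro h _ ⟨η, rfl⟩
      rw [hadj, LinearMap.adjoint_inner_left, h, inner_zero_right]
    · intro h
      apply ext_inner_left ℝ
      intro η
      have := h (YtL η) ⟨η, rfl⟩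
      rw [hadj, LinearMap.adjoint_inner_left] at this
      rw [this, inner_zero_right]
  have hrange : (LinearMap.ker YL)ᗮ = LinearMap.range YtL := by
    rw [hker, Submodule.orthogonal_orthogonal]
  rw [hrange] at hv
  obtain ⟨η₀, rfl⟩ := hv
  rcases eq_or_ne (YtL η₀) 0 with h0 | h0
  · rw [h0]
    simp [mulVecE]
  · have hnv : 0 < ‖YtL η₀‖ := norm_pos_iff.mpr h0
    have key : c * ‖YtL η₀‖ * ‖YtL η₀‖ ≤ ‖YtL η₀‖ * ‖mulVecE Y (YtL η₀)‖ := by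
      have h1 : (‖YtL η₀‖:ℝ)^2 = inner ℝ (YtL η₀) (YtL η₀) := (real_inner_self_eq_norm_sq _).symm
      have h2 : (inner ℝ (YtL η₀) (YtL η₀) : ℝ) = inner ℝ η₀ (YL (YtL η₀)) := by
        rw [hadj, LinearMap.adjoint_inner_left]
      have h3 : (inner ℝ η₀ (YL (YtL η₀)) : ℝ) ≤ ‖η₀‖ * ‖YL (YtL η₀)‖ := real_inner_le_norm _ _
      have h4 : c * ‖η₀‖ ≤ ‖YtL η₀‖ := hYt η₀
      have h5 : (0:ℝ) ≤ ‖YL (YtL η₀)‖ := norm_nonneg _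
      have h6 : mulVecE Y (YtL η₀) = YL (YtL η₀) := rfl
      rw [h6]
      nlinarith [norm_nonneg η₀]
    have := le_of_mul_le_mul_left (by linarith [key] : ‖YtL η₀‖ * (c * ‖YtL η₀‖) ≤ ‖YtL η₀‖ * ‖mulVecE Y (YtL η₀)‖) hnv
    exact this
lemma aux_div (a nu A B : ℝ) (ha : 0 < a) (hnu : 0 ≤ nu) (hA : 0 ≤ A) (hB : 0 ≤ B)
    (h : a * nu^2 ≤ nu * A + nu * B) : a * nu ≤ A + B := by
  rcases eq_or_lt_of_le hnu with h0 | h0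
  · rw [← h0]; nlinarith
  · nlinarith

lemma combo1 (a b c ω1 ω2 : ℝ) (ha : a ≠ 0) (hc : c ≠ 0) :
    (1/a)*(ω1 + b*((1/c)*ω2)) + (1/c)*ω2 = (1/a)*ω1 + ((1+b/a)*(1/c))*ω2 := by
  field_simp; ring

lemma combo2 (a b c ω1 ω2 : ℝ) (ha : a ≠ 0) (hc : c ≠ 0) :
    (1/c)*(ω1 + b*((1/a)*ω1 + ((1+b/a)*(1/c))*ω2))
      = ((1+b/a)*(1/c))*ω1 + ((b/c^2)*(1+b/a))*ω2 := by
  field_simp; ring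

set_option maxHeartbeats 1000000 in
/-- Lower bound `(1/σ_max(Ψ))‖z‖ ≤ ‖Ez‖` for the saddle point matrix
`E = [[X, Yᵀ],[Y, 0]]`, together with the explicit formula for `σ_max(Ψ)`. -/
theorem stmt1 (n m : ℕ)
    (X : Matrix (Fin n) (Fin n) ℝ) (Y : Matrix (Fin m) (Fin n) ℝ)
    (hXpsd : X.PosSemidef)
    (a b c : ℝ) (ha : 0 < a) (hc : 0 < c)
    (hcoer : ∀ x : EuclideanSpace ℝ (Fin n),
      mulVecE Y x = 0 → a * ‖x‖ ^ 2 ≤ inner ℝ x (mulVecE X x))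
    (hb : specNorm X ≤ b)
    (hYt : ∀ η : EuclideanSpace ℝ (Fin m), c * ‖η‖ ≤ ‖mulVecE Yᵀ η‖)
    (E : Matrix (Fin n ⊕ Fin m) (Fin n ⊕ Fin m) ℝ)
    (hE : E = fromBlocks X Yᵀ Y 0)
    (Ψ : Matrix (Fin 2) (Fin 2) ℝ)
    (hΨ : Ψ = !![1 / a, (1 + b / a) * (1 / c);
                 (1 + b / a) * (1 / c), (b / c ^ 2) * (1 + b / a)])
    (s : ℝ)
    (hs : s = (b * a + b ^ 2 + c ^ 2 +
        Real.sqrt (b ^ 4 + 2 * b ^ 3 * a + b ^ 2 * a ^ 2 + 2 * b ^ 2 * c ^ 2 +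
          6 * b * a * c ^ 2 + 4 * a ^ 2 * c ^ 2 + c ^ 4)) / (2 * a * c ^ 2)) :
    specNorm Ψ = s ∧
    ∀ z : EuclideanSpace ℝ (Fin n ⊕ Fin m), (1 / s) * ‖z‖ ≤ ‖mulVecE E z‖ := by
  have hb0 : (0:ℝ) ≤ b := le_trans (norm_nonneg _) hb
  obtain ⟨hsp, hub, heig⟩ := specAux a b c s ha hb0 hc hs
  have hs0 : 0 < s := lt_trans (by positivity) hsp
  have hXb : ∀ x : EuclideanSpace ℝ (Fin n), ‖mulVecE X x‖ ≤ b * ‖x‖ := fun x =>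
    le_trans (mulVecE_le X x) (mul_le_mul_of_nonneg_right hb (norm_nonneg x))
  constructor
  · -- spectral norm formula
    have hqpos : (0:ℝ) < (1+b/a)*(1/c) := by positivity
    apply le_antisymm
    · apply ContinuousLinearMap.opNorm_le_bound _ hs0.le
      intro v
      have h1 : ‖LinearMap.toContinuousLinearMap (Matrix.toEuclideanLin Ψ) v‖^2
          = ((1/a) * v 0 + ((1+b/a)*(1/c)) * v 1)^2 + (((1+b/a)*(1/c)) * v 0 + ((b/c^2)*(1+b/a)) * v 1)^2 := by
        have : LinearMap.toContinuousLinearMap (Matrix.toEuclideanLin Ψ) v = mulVecE Ψ v := rfl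
        rw [this, normsq_eq, Fin.sum_univ_two, mulVecE_apply, mulVecE_apply, Fin.sum_univ_two,
          Fin.sum_univ_two, hΨ]
        simp [Matrix.cons_val_zero, Matrix.cons_val_one]
      have h2 : ‖v‖^2 = (v 0)^2 + (v 1)^2 := by rw [normsq_eq, Fin.sum_univ_two]
      have h3 : ‖LinearMap.toContinuousLinearMap (Matrix.toEuclideanLin Ψ) v‖^2 ≤ (s*‖v‖)^2 := by
        rw [h1, mul_pow, h2]; exact hub (v 0) (v 1)
      exact le_of_pow_le_pow_left₀ two_ne_zero (by positivity) h3
    · -- eigenvector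
      set v₀ : EuclideanSpace ℝ (Fin 2) := (WithLp.equiv 2 (Fin 2 → ℝ)).symm ![(1+b/a)*(1/c), s - 1/a] with hv₀
      have hv0 : v₀ 0 = (1+b/a)*(1/c) := rfl
      have hv1 : v₀ 1 = s - 1/a := rfl
      have hEig : mulVecE Ψ v₀ = s • v₀ := by
        apply PiLp.ext
        intro i
        fin_cases i
        · rw [mulVecE_apply, Fin.sum_univ_two]
          simp only [hΨ, hv0, hv1]
          simp [Matrix.cons_val_zero, Matrix.cons_val_one, PiLp.smul_apply, smul_eq_mul]
          rw [hv0]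
          field_simp
          ring
        · rw [mulVecE_apply, Fin.sum_univ_two]
          simp only [hΨ, hv0, hv1]
          simp [Matrix.cons_val_zero, Matrix.cons_val_one, PiLp.smul_apply, smul_eq_mul]
          rw [hv1]
          linear_combination heig
      have hv₀ne : ‖v₀‖ ≠ 0 := by
        simp only [norm_ne_zero_iff]
        intro h
        have : v₀ 0 = 0 := by rw [h]; rfl
        rw [hv0] at this; exact hqpos.ne' this
      have : s * ‖v₀‖ ≤ specNorm Ψ * ‖v₀‖ := by
        have hle := (LinearMap.toContinuousLinearMap (Matrix.toEuclideanLin Ψ)).le_opNorm v₀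
        have : LinearMap.toContinuousLinearMap (Matrix.toEuclideanLin Ψ) v₀ = mulVecE Ψ v₀ := rfl
        rw [this, hEig, norm_smul, Real.norm_eq_abs, abs_of_pos hs0] at hle
        exact hle
      have hnv : 0 < ‖v₀‖ := lt_of_le_of_ne (norm_nonneg _) (Ne.symm hv₀ne)
      exact le_of_mul_le_mul_right this hnv
  · -- the estimate
    intro z
    set x : EuclideanSpace ℝ (Fin n) := (WithLp.equiv 2 _).symm (fun i => z (Sum.inl i)) with hxdef
    set η : EuclideanSpace ℝ (Fin m) := (WithLp.equiv 2 _).symm (fun j => z (Sum.inr j)) with hηdef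
    set w : EuclideanSpace ℝ (Fin n ⊕ Fin m) := mulVecE E z with hwdef
    set w1 : EuclideanSpace ℝ (Fin n) := (WithLp.equiv 2 _).symm (fun i => w (Sum.inl i)) with hw1def
    set w2 : EuclideanSpace ℝ (Fin m) := (WithLp.equiv 2 _).symm (fun j => w (Sum.inr j)) with hw2def
    -- norms split
    have hznorm : ‖z‖^2 = ‖x‖^2 + ‖η‖^2 := by
      rw [normsq_eq, normsq_eq, normsq_eq, Fintype.sum_sum_type]; rfl
    have hwnorm : ‖w‖^2 = ‖w1‖^2 + ‖w2‖^2 := by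
      rw [normsq_eq, normsq_eq, normsq_eq, Fintype.sum_sum_type]; rfl
    -- block structure
    have hw1 : w1 = mulVecE X x + mulVecE Yᵀ η := by
      apply PiLp.ext
      intro i
      have : w1 i = w (Sum.inl i) := rfl
      rw [this]
      rw [show w (Sum.inl i) = mulVecE E z (Sum.inl i) from rfl, mulVecE_apply,
        Fintype.sum_sum_type]
      simp only [hE, Matrix.fromBlocks_apply₁₁, Matrix.fromBlocks_apply₁₂]
      rw [show (mulVecE X x + mulVecE Yᵀ η) i = mulVecE X x i + mulVecE Yᵀ η i from rfl,
        mulVecE_apply, mulVecE_apply]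
      rfl
    have hw2 : w2 = mulVecE Y x := by
      apply PiLp.ext
      intro j
      have : w2 j = w (Sum.inr j) := rfl
      rw [this]
      rw [show w (Sum.inr j) = mulVecE E z (Sum.inr j) from rfl, mulVecE_apply,
        Fintype.sum_sum_type]
      simp only [hE, Matrix.fromBlocks_apply₂₁, Matrix.fromBlocks_apply₂₂]
      rw [mulVecE_apply]
      simp
      rfl
    -- eta bound
    have hηb : c * ‖η‖ ≤ ‖w1‖ + b * ‖x‖ := by
      have h1 : mulVecE Yᵀ η = w1 - mulVecE X x := by rw [hw1]; abel
      calc c * ‖η‖ ≤ ‖mulVecE Yᵀ η‖ := hYt η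
        _ = ‖w1 - mulVecE X x‖ := by rw [h1]
        _ ≤ ‖w1‖ + ‖mulVecE X x‖ := norm_sub_le _ _
        _ ≤ ‖w1‖ + b * ‖x‖ := by linarith [hXb x]
    -- decomposition
    set K : Submodule ℝ (EuclideanSpace ℝ (Fin n)) := LinearMap.ker (Matrix.toEuclideanLin Y) with hK
    obtain ⟨u, hu, v, hv, hx⟩ := K.exists_add_mem_mem_orthogonal x
    have hYu : mulVecE Y u = 0 := hu
    have hYv : mulVecE Y v = mulVecE Y x := by
      have : mulVecE Y x = mulVecE Y u + mulVecE Y v := by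
        rw [hx]; exact map_add (Matrix.toEuclideanLin Y) u v
      rw [this, hYu, zero_add]
    have hvb : c * ‖v‖ ≤ ‖w2‖ := by
      have := orth_bound Y c hYt hc v hv
      rwa [hYv, ← hw2] at this
    -- u bound
    have hub2 : a * ‖u‖^2 ≤ ‖u‖ * ‖w1‖ + ‖u‖ * (b * ‖v‖) := by
      have h1 : a * ‖u‖^2 ≤ inner ℝ u (mulVecE X u) := hcoer u hYu
      have hXx : mulVecE X x = mulVecE X u + mulVecE X v := by
        rw [hx]; exact map_add (Matrix.toEuclideanLin X) u v
      have h2 : (inner ℝ u (mulVecE X u) : ℝ)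
          = inner ℝ u w1 - inner ℝ u (mulVecE Yᵀ η) - inner ℝ u (mulVecE X v) := by
        rw [hw1, hXx]
        rw [inner_add_right, inner_add_right]
        ring
      have h3 : (inner ℝ u (mulVecE Yᵀ η) : ℝ) = 0 := by
        have : (inner ℝ u (mulVecE Yᵀ η) : ℝ) = inner ℝ (Matrix.toEuclideanLin Y u) η := by
          rw [show mulVecE Yᵀ η = Matrix.toEuclideanLin Yᵀ η from rfl, transpose_eq_adjoint,
            LinearMap.adjoint_inner_right]
        rw [this, show Matrix.toEuclideanLin Y u = mulVecE Y u from rfl, hYu, inner_zero_left]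
      have h4 : (inner ℝ u w1 : ℝ) ≤ ‖u‖ * ‖w1‖ := real_inner_le_norm _ _
      have h5 : -(inner ℝ u (mulVecE X v) : ℝ) ≤ ‖u‖ * (b * ‖v‖) := by
        have h5a := abs_real_inner_le_norm u (mulVecE X v)
        have h5b : ‖u‖ * ‖mulVecE X v‖ ≤ ‖u‖ * (b * ‖v‖) :=
          mul_le_mul_of_nonneg_left (hXb v) (norm_nonneg u)
        linarith [neg_abs_le (inner ℝ u (mulVecE X v) : ℝ)]
      linarith [h1, h4, h5, h2.ge, h2.le, h3.ge, h3.le]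
    have huB : a * ‖u‖ ≤ ‖w1‖ + b * ‖v‖ :=
      aux_div a ‖u‖ ‖w1‖ (b * ‖v‖) ha (norm_nonneg u) (norm_nonneg w1) (by positivity) hub2
    have hxn : ‖x‖ ≤ ‖u‖ + ‖v‖ := by rw [hx]; exact norm_add_le _ _
    -- combined bounds
    set ω1 := ‖w1‖
    set ω2 := ‖w2‖
    have hω1 : (0:ℝ) ≤ ω1 := norm_nonneg _
    have hω2 : (0:ℝ) ≤ ω2 := norm_nonneg _
    have hxB : ‖x‖ ≤ (1/a)*ω1 + ((1+b/a)*(1/c))*ω2 := by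
      have hv' : ‖v‖ ≤ (1/c)*ω2 := by
        rw [div_mul_eq_mul_div, le_div_iff₀ hc, one_mul]; linarith [hvb]
      have hu' : ‖u‖ ≤ (1/a)*(ω1 + b*‖v‖) := by
        rw [div_mul_eq_mul_div, le_div_iff₀ ha, one_mul]; linarith [huB]
      have hbv : b*‖v‖ ≤ b*((1/c)*ω2) := by
        exact mul_le_mul_of_nonneg_left hv' hb0
      calc ‖x‖ ≤ ‖u‖ + ‖v‖ := hxn
        _ ≤ (1/a)*(ω1 + b*((1/c)*ω2)) + (1/c)*ω2 := by
            have step : (1/a)*(ω1 + b*‖v‖) ≤ (1/a)*(ω1 + b*((1/c)*ω2)) :=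
              mul_le_mul_of_nonneg_left (by linarith) (by positivity)
            linarith
        _ = (1/a)*ω1 + ((1+b/a)*(1/c))*ω2 := combo1 a b c ω1 ω2 ha.ne' hc.ne'
    have hηB : ‖η‖ ≤ ((1+b/a)*(1/c))*ω1 + ((b/c^2)*(1+b/a))*ω2 := by
      have h1 : ‖η‖ ≤ (1/c)*(ω1 + b*‖x‖) := by
        rw [div_mul_eq_mul_div, le_div_iff₀ hc, one_mul]; linarith [hηb]
      have h2 : b*‖x‖ ≤ b*((1/a)*ω1 + ((1+b/a)*(1/c))*ω2) :=
        mul_le_mul_of_nonneg_left hxB hb0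
      calc ‖η‖ ≤ (1/c)*(ω1 + b*((1/a)*ω1 + ((1+b/a)*(1/c))*ω2)) := by
            have step : (1/c)*(ω1 + b*‖x‖) ≤ (1/c)*(ω1 + b*((1/a)*ω1 + ((1+b/a)*(1/c))*ω2)) :=
              mul_le_mul_of_nonneg_left (by linarith) (by positivity)
            linarith
        _ = ((1+b/a)*(1/c))*ω1 + ((b/c^2)*(1+b/a))*ω2 := combo2 a b c ω1 ω2 ha.ne' hc.ne'
    -- final
    have hq0 : (0:ℝ) ≤ (1/a)*ω1 + ((1+b/a)*(1/c))*ω2 := by positivity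
    have hr0 : (0:ℝ) ≤ ((1+b/a)*(1/c))*ω1 + ((b/c^2)*(1+b/a))*ω2 := by positivity
    have hsq : ‖z‖^2 ≤ (s*‖w‖)^2 := by
      rw [hznorm, mul_pow, hwnorm]
      have e1 : ‖x‖^2 ≤ ((1/a)*ω1 + ((1+b/a)*(1/c))*ω2)^2 :=
        pow_le_pow_left₀ (norm_nonneg x) hxB 2
      have e2 : ‖η‖^2 ≤ (((1+b/a)*(1/c))*ω1 + ((b/c^2)*(1+b/a))*ω2)^2 :=
        pow_le_pow_left₀ (norm_nonneg η) hηB 2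
      have := hub ω1 ω2
      linarith
    have hzw : ‖z‖ ≤ s * ‖w‖ := le_of_pow_le_pow_left₀ two_ne_zero (by positivity) hsq
    rw [div_mul_eq_mul_div, div_le_iff₀ hs0, one_mul]
    calc ‖z‖ ≤ s * ‖w‖ := hzw
      _ = ‖w‖ * s := mul_comm _ _
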